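/- Let T ⊂ ℝ^d be a nonempty closed convex set containing the origin. Then for every x ∈ ℝ^d and every σ > 0, sup_{t ∈ T} ⟨x, t⟩ = sup_{t ∈ T}{⟨x,t⟩ − ‖t‖²/(2σ)} + (1/2) ∫_σ^∞ ‖Π_{T/ν}(x)‖² dν, and in particular sup_{t ∈ T}⟨x,t⟩ = (1/2)∫_0^∞ ‖Π_{T/ν}(x)‖² dν, where both sides may be +∞. -/

import Mathlib

open MeasureTheory Metric Set
open scoped ENNReal NNReal Pointwise
set_option maxHeartbeats 1000000
noncomputable section

variable {F : Type*} [NormedAddCommGroup F] [InnerProductSpace ℝ F]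

lemma nearest_inner_le {S : Set F} (hS : Convex ℝ S) {y p : F} (hp : p ∈ S)
    (hmin : ∀ t ∈ S, dist y p ≤ dist y t) {t : F} (ht : t ∈ S) :
    inner ℝ (y - p) (t - p) ≤ (0:ℝ) := by
  have : Nonempty S := ⟨⟨p, hp⟩⟩
  have h1 : ‖y - p‖ = ⨅ w : S, ‖y - w‖ := by
    refine le_antisymm (le_ciInf fun w => by simpa [dist_eq_norm] using hmin w w.2) ?_
    have hb : BddBelow (Set.range fun w : S => ‖y - (w : F)‖) :=
      ⟨0, by rintro a ⟨w, rfl⟩; exact norm_nonneg _⟩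
    exact ciInf_le hb ⟨p, hp⟩
  exact (norm_eq_iInf_iff_real_inner_le_zero hS hp).1 h1 t ht

lemma nearest_lipschitz {y1 y2 p1 p2 : F}
    (h1 : inner ℝ (y1 - p1) (p2 - p1) ≤ (0:ℝ)) (h2 : inner ℝ (y2 - p2) (p1 - p2) ≤ (0:ℝ)) :
    ‖p1 - p2‖ ≤ ‖y1 - y2‖ := by
  have key : ‖p1 - p2‖^2 ≤ inner ℝ (y1 - y2) (p1 - p2) := by
    have hs := real_inner_self_eq_norm_sq (p1 - p2)
    simp only [inner_sub_left, inner_sub_right] at h1 h2 hs ⊢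
    linarith [real_inner_comm y1 p1, real_inner_comm y1 p2, real_inner_comm y2 p1,
      real_inner_comm y2 p2, real_inner_comm p1 p2]
  have hn := real_inner_le_norm (y1 - y2) (p1 - p2)
  nlinarith [norm_nonneg (p1 - p2), norm_nonneg (y1 - y2)]

lemma lintegral_monotone_union {α : Type*} [MeasurableSpace α] {μ : Measure α}
    {f : α → ℝ≥0∞} {s : ℕ → Set α} {S : Set α}
    (hmeas : ∀ n, MeasurableSet (s n)) (hmono : Monotone s) (hunion : (⋃ n, s n) = S)
    (hae : ∀ n, AEMeasurable f (μ.restrict (s n))) :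
    ∫⁻ ν in S, f ν ∂μ = ⨆ n, ∫⁻ ν in s n, f ν ∂μ := by
  have hS : MeasurableSet S := hunion ▸ MeasurableSet.iUnion hmeas
  have hind : ∀ ν, S.indicator f ν = ⨆ n, (s n).indicator f ν := by
    intro ν
    by_cases hν : ν ∈ S
    · rw [Set.indicator_of_mem hν]
      obtain ⟨n0, hn0⟩ := mem_iUnion.1 (hunion ▸ hν : ν ∈ ⋃ n, s n)
      refine le_antisymm ?_ (iSup_le fun n => ?_)
      · exact le_iSup_of_le n0 (by rw [Set.indicator_of_mem hn0])
      · by_cases h : ν ∈ s n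
        · rw [Set.indicator_of_mem h]
        · rw [Set.indicator_of_notMem h]; exact zero_le
    · have hn : ∀ n, ν ∉ s n := fun n h => hν (hunion ▸ (mem_iUnion.2 ⟨n, h⟩))
      simp [Set.indicator_of_notMem, hν, hn]
  calc ∫⁻ ν in S, f ν ∂μ = ∫⁻ ν, S.indicator f ν ∂μ := (lintegral_indicator hS f).symm
    _ = ∫⁻ ν, ⨆ n, (s n).indicator f ν ∂μ := by simp_rw [hind]
    _ = ⨆ n, ∫⁻ ν, (s n).indicator f ν ∂μ := by
        refine lintegral_iSup' (fun n => (aemeasurable_indicator_iff (hmeas n)).2 (hae n)) ?_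
        exact Filter.Eventually.of_forall fun ν n m hnm =>
          Set.indicator_le_indicator_of_subset (hmono hnm) (fun a => zero_le) ν
    _ = ⨆ n, ∫⁻ ν in s n, f ν ∂μ := by simp_rw [lintegral_indicator (hmeas _)]

lemma half_ofReal_two_mul (a : ℝ) :
    (1/2 : ℝ≥0∞) * ENNReal.ofReal (2 * a) = ENNReal.ofReal a := by
  rw [ENNReal.ofReal_mul (by norm_num : (0:ℝ) ≤ 2), ← mul_assoc]
  norm_num
  rw [ENNReal.inv_mul_cancel (by norm_num) (by norm_num), one_mul]

/-- For a nonempty closed convex `T ⊆ ℝ^d` with `0 ∈ T`, for every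
`x ∈ ℝ^d` and `σ > 0`,
`sup_{t∈T}⟨x,t⟩ = sup_{t∈T}{⟨x,t⟩ − ‖t‖²/(2σ)} + (1/2)∫_σ^∞ ‖Π_{T/ν}(x)‖² dν`,
and in particular `sup_{t∈T}⟨x,t⟩ = (1/2)∫_0^∞ ‖Π_{T/ν}(x)‖² dν`, where both sides
may be `+∞`. -/
theorem statement3 {d : ℕ} (T : Set (EuclideanSpace ℝ (Fin d)))
    (hne : T.Nonempty) (hcl : IsClosed T) (hconv : Convex ℝ T)
    (h0 : (0 : EuclideanSpace ℝ (Fin d)) ∈ T)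
    (proj : ℝ → EuclideanSpace ℝ (Fin d) → EuclideanSpace ℝ (Fin d))
    (hproj : ∀ ν : ℝ, 0 < ν → ∀ x, proj ν x ∈ ν⁻¹ • T ∧
      ∀ t ∈ ν⁻¹ • T, dist x (proj ν x) ≤ dist x t) :
    ∀ x : EuclideanSpace ℝ (Fin d),
      (∀ σ : ℝ, 0 < σ →
        (⨆ t : T, ENNReal.ofReal (inner ℝ x (t : EuclideanSpace ℝ (Fin d)) : ℝ)) =
          ENNReal.ofReal (⨆ t : T,
              ((inner ℝ x (t : EuclideanSpace ℝ (Fin d)) : ℝ)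
                - ‖(t : EuclideanSpace ℝ (Fin d))‖ ^ 2 / (2 * σ)))
            + (1 / 2) * ∫⁻ ν in Set.Ioi σ, ENNReal.ofReal (‖proj ν x‖ ^ 2)) ∧
      (⨆ t : T, ENNReal.ofReal (inner ℝ x (t : EuclideanSpace ℝ (Fin d)) : ℝ)) =
        (1 / 2) * ∫⁻ ν in Set.Ioi (0 : ℝ), ENNReal.ofReal (‖proj ν x‖ ^ 2) := by
  intro x
  set q : ℝ → EuclideanSpace ℝ (Fin d) := fun ν => ν • proj ν x with hqdef
  -- membership
  have hq_mem : ∀ ν : ℝ, 0 < ν → q ν ∈ T := by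
    intro ν hν
    obtain ⟨t, ht, hts⟩ := (hproj ν hν x).1
    have hpt : proj ν x = ν⁻¹ • t := hts.symm
    have : q ν = t := by
      simp only [hqdef, hpt, smul_smul]
      rw [mul_inv_cancel₀ hν.ne', one_smul]
    rwa [this]
  have hq_min : ∀ ν : ℝ, 0 < ν → ∀ t ∈ T, dist (ν • x) (q ν) ≤ dist (ν • x) t := by
    intro ν hν t ht
    have h1 : dist x (proj ν x) ≤ dist x (ν⁻¹ • t) :=
      (hproj ν hν x).2 _ (smul_mem_smul_set ht)
    have h2 : dist (ν • x) (q ν) = ν * dist x (proj ν x) := by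
      simp [hqdef, dist_smul₀, abs_of_pos hν]
    have h3 : dist (ν • x) t = ν * dist x (ν⁻¹ • t) := by
      have : (ν : ℝ) • (ν⁻¹ • t) = t := by rw [smul_smul, mul_inv_cancel₀ hν.ne', one_smul]
      calc dist (ν • x) t = dist (ν • x) (ν • ν⁻¹ • t) := by rw [this]
        _ = ν * dist x (ν⁻¹ • t) := by simp [dist_smul₀, abs_of_pos hν]
    rw [h2, h3]
    exact mul_le_mul_of_nonneg_left h1 hν.le
  have hinner : ∀ ν : ℝ, 0 < ν → ∀ t ∈ T, inner ℝ (ν • x - q ν) (t - q ν) ≤ (0:ℝ) :=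
    fun ν hν t ht => nearest_inner_le hconv (hq_mem ν hν) (hq_min ν hν) ht
  have hqlip : ∀ ν μ : ℝ, 0 < ν → 0 < μ → ‖q ν - q μ‖ ≤ |ν - μ| * ‖x‖ := by
    intro ν μ hν hμ
    have := nearest_lipschitz (hinner ν hν _ (hq_mem μ hμ)) (hinner μ hμ _ (hq_mem ν hν))
    calc ‖q ν - q μ‖ ≤ ‖ν • x - μ • x‖ := this
      _ = |ν - μ| * ‖x‖ := by rw [← sub_smul, norm_smul, Real.norm_eq_abs]
  have hq_cont : ContinuousOn q (Ioi 0) := by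
    refine LipschitzOnWith.continuousOn (K := ‖x‖₊) ?_
    refine LipschitzOnWith.of_dist_le_mul fun a ha b hb => ?_
    have := hqlip a b ha hb
    simpa [dist_eq_norm, Real.dist_eq, mul_comm] using this
  -- the Moreau envelope value function
  set g : ℝ → ℝ := fun ν => inner ℝ x (q ν) - ‖q ν‖^2 / (2 * ν) with hgdef
  -- expansion of the squared norm
  have hexpand : ∀ (τ : ℝ) (t : EuclideanSpace ℝ (Fin d)),
      ‖τ • x - t‖^2 = τ^2 * ‖x‖^2 - 2 * τ * inner ℝ x t + ‖t‖^2 := by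
    intro τ t
    rw [norm_sub_sq_real]
    rw [norm_smul, real_inner_smul_left, Real.norm_eq_abs, mul_pow, sq_abs]
    ring
  -- g τ is the maximum of the penalized objective
  have hkey : ∀ τ : ℝ, 0 < τ → ∀ t ∈ T, inner ℝ x t - ‖t‖^2 / (2 * τ) ≤ g τ := by
    intro τ hτ t ht
    have hd : dist (τ • x) (q τ) ≤ dist (τ • x) t := hq_min τ hτ t ht
    have hsq : ‖τ • x - q τ‖^2 ≤ ‖τ • x - t‖^2 := by
      rw [dist_eq_norm, dist_eq_norm] at hd
      exact pow_le_pow_left₀ (norm_nonneg _) hd 2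
    rw [hexpand, hexpand] at hsq
    have h2τ : (0:ℝ) < 2 * τ := by linarith
    have hlin : ‖q τ‖^2 - 2 * τ * inner ℝ x (q τ) ≤ ‖t‖^2 - 2 * τ * (inner ℝ x t : ℝ) := by
      linarith
    have e1 : ∀ a b : ℝ, a - b / (2 * τ) = (2 * τ * a - b) / (2 * τ) := by
      intro a b; field_simp
    show (inner ℝ x t : ℝ) - ‖t‖^2 / (2 * τ) ≤ inner ℝ x (q τ) - ‖q τ‖^2 / (2 * τ)
    rw [e1, e1, div_le_div_iff₀ h2τ h2τ]
    nlinarith [hlin]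
  -- g is nonnegative
  have hg0 : ∀ τ : ℝ, 0 < τ → 0 ≤ g τ := by
    intro τ hτ
    have := hkey τ hτ 0 h0
    simpa using this
  -- upper bound on g
  have hgle : ∀ τ : ℝ, 0 < τ → g τ ≤ τ * ‖x‖^2 / 2 := by
    intro τ hτ
    have hip : (inner ℝ x (q τ) : ℝ) ≤ ‖x‖ * ‖q τ‖ := real_inner_le_norm x (q τ)
    have hdiv : ‖x‖ * ‖q τ‖ - τ * ‖x‖^2 / 2 ≤ ‖q τ‖^2 / (2 * τ) := by
      rw [le_div_iff₀ (by linarith : (0:ℝ) < 2 * τ)]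
      nlinarith [sq_nonneg (τ * ‖x‖ - ‖q τ‖)]
    rw [hgdef]
    dsimp only
    linarith
  -- fundamental difference inequality
  have ha : ∀ σ τ : ℝ, 0 < σ → 0 < τ →
      ‖q σ‖^2 * (τ - σ) / (2 * σ * τ) ≤ g τ - g σ := by
    intro σ τ hσ hτ
    have h1 : inner ℝ x (q σ) - ‖q σ‖^2 / (2 * τ) ≤ g τ := hkey τ hτ _ (hq_mem σ hσ)
    have h2 : g σ = inner ℝ x (q σ) - ‖q σ‖^2 / (2 * σ) := rfl
    have h3 : ‖q σ‖^2 / (2 * σ) - ‖q σ‖^2 / (2 * τ) = ‖q σ‖^2 * (τ - σ) / (2 * σ * τ) := by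
      field_simp
    linarith
  -- derivative of g
  have hg' : ∀ ν : ℝ, 0 < ν → HasDerivAt g (‖q ν‖^2 / (2 * ν^2)) ν := by
    intro ν hν
    rw [hasDerivAt_iff_tendsto_slope]
    have hbound : ∀ μ : ℝ, 0 < μ → μ ≠ ν →
        min (‖q μ‖^2) (‖q ν‖^2) / (2 * ν * μ) ≤ slope g ν μ ∧
        slope g ν μ ≤ max (‖q μ‖^2) (‖q ν‖^2) / (2 * ν * μ) := by
      intro μ hμ hne'
      have h2νμ : (0:ℝ) < 2 * ν * μ := by positivity
      have h2μν : (0:ℝ) < 2 * μ * ν := by positivity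
      have h1 := (div_le_iff₀ h2νμ).1 (ha ν μ hν hμ)
      have h2 := (div_le_iff₀ h2μν).1 (ha μ ν hμ hν)
      have hmin1 := min_le_left (‖q μ‖^2) (‖q ν‖^2)
      have hmin2 := min_le_right (‖q μ‖^2) (‖q ν‖^2)
      have hmax1 := le_max_left (‖q μ‖^2) (‖q ν‖^2)
      have hmax2 := le_max_right (‖q μ‖^2) (‖q ν‖^2)
      rcases lt_or_gt_of_ne hne' with hlt | hgt
      · -- μ < ν
        have hd : (0:ℝ) < ν - μ := by linarith
        have hslope : slope g ν μ = (g ν - g μ) / (ν - μ) := by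
          rw [slope_comm, slope_def_field]
        rw [hslope]
        constructor
        · rw [div_le_div_iff₀ h2νμ hd]
          nlinarith [mul_le_mul_of_nonneg_right hmin1 hd.le]
        · rw [div_le_div_iff₀ hd h2νμ]
          nlinarith [mul_le_mul_of_nonneg_right hmax2 hd.le]
      · -- ν < μ
        have hd : (0:ℝ) < μ - ν := by linarith
        have hslope : slope g ν μ = (g μ - g ν) / (μ - ν) := by
          rw [slope_def_field]
        rw [hslope]
        constructor
        · rw [div_le_div_iff₀ h2νμ hd]
          nlinarith [mul_le_mul_of_nonneg_right hmin2 hd.le]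
        · rw [div_le_div_iff₀ hd h2νμ]
          nlinarith [mul_le_mul_of_nonneg_right hmax1 hd.le]
    -- continuity of the bounds
    have hql : Filter.Tendsto (fun μ => ‖q μ‖^2) (nhdsWithin ν {ν}ᶜ) (nhds (‖q ν‖^2)) := by
      have hc : ContinuousAt q ν := hq_cont.continuousAt (Ioi_mem_nhds hν)
      exact ((hc.norm.pow 2)).tendsto.mono_left nhdsWithin_le_nhds
    have hden : Filter.Tendsto (fun μ : ℝ => 2 * ν * μ) (nhdsWithin ν {ν}ᶜ) (nhds (2 * ν * ν)) := by
      exact ((continuous_const.mul continuous_id).tendsto ν).mono_left nhdsWithin_le_nhds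
    have hdenne : (2 : ℝ) * ν * ν ≠ 0 := by positivity
    have heq : min (‖q ν‖^2) (‖q ν‖^2) / (2 * ν * ν) = ‖q ν‖^2 / (2 * ν^2) := by
      rw [min_self]; ring_nf
    have heq' : max (‖q ν‖^2) (‖q ν‖^2) / (2 * ν * ν) = ‖q ν‖^2 / (2 * ν^2) := by
      rw [max_self]; ring_nf
    have hL : Filter.Tendsto (fun μ => min (‖q μ‖^2) (‖q ν‖^2) / (2 * ν * μ))
        (nhdsWithin ν {ν}ᶜ) (nhds (‖q ν‖^2 / (2 * ν^2))) := by
      rw [← heq]; exact (hql.min tendsto_const_nhds).div hden hdenne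
    have hU : Filter.Tendsto (fun μ => max (‖q μ‖^2) (‖q ν‖^2) / (2 * ν * μ))
        (nhdsWithin ν {ν}ᶜ) (nhds (‖q ν‖^2 / (2 * ν^2))) := by
      rw [← heq']; exact (hql.max tendsto_const_nhds).div hden hdenne
    have hpos : ∀ᶠ μ in nhdsWithin ν {ν}ᶜ, 0 < μ :=
      (eventually_gt_nhds hν).filter_mono nhdsWithin_le_nhds
    have hneq : ∀ᶠ μ in nhdsWithin ν {ν}ᶜ, μ ≠ ν := by
      filter_upwards [self_mem_nhdsWithin] with μ hμ
      exact hμ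
    refine tendsto_of_tendsto_of_tendsto_of_le_of_le' hL hU ?_ ?_
    · filter_upwards [hpos, hneq] with μ h1' h2'
      exact (hbound μ h1' h2').1
    · filter_upwards [hpos, hneq] with μ h1' h2'
      exact (hbound μ h1' h2').2
  -- continuity of the derivative
  have hcontD : ContinuousOn (fun ν : ℝ => ‖q ν‖^2 / (2 * ν^2)) (Ioi 0) := by
    apply ContinuousOn.div
    · exact (hq_cont.norm).pow 2
    · exact (continuous_const.mul (continuous_pow 2)).continuousOn
    · intro ν hν
      have hν' : (0:ℝ) < ν := hν
      exact (mul_pos two_pos (pow_pos hν' 2)).ne'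
  -- FTC
  have hftc : ∀ σ M : ℝ, 0 < σ → σ ≤ M →
      ∫ ν in σ..M, ‖q ν‖^2 / (2 * ν^2) = g M - g σ := by
    intro σ M hσ hσM
    have hsub : uIcc σ M ⊆ Ioi 0 := by
      rw [uIcc_of_le hσM]; intro ν hν; exact lt_of_lt_of_le hσ hν.1
    exact intervalIntegral.integral_eq_sub_of_hasDerivAt (fun ν hν => hg' ν (hsub hν))
      ((hcontD.mono hsub).intervalIntegrable)
  -- relation between proj and q
  have hproj_eq : ∀ ν : ℝ, 0 < ν → ‖proj ν x‖^2 = ‖q ν‖^2 / ν^2 := by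
    intro ν hν
    have h1 : proj ν x = ν⁻¹ • q ν := by
      rw [hqdef]; simp only [smul_smul]
      rw [inv_mul_cancel₀ hν.ne', one_smul]
    rw [h1, norm_smul, Real.norm_eq_abs, abs_of_pos (inv_pos.2 hν), mul_pow, inv_pow]
    rw [inv_mul_eq_div]
  -- continuity of r
  have hr_cont : ContinuousOn (fun ν : ℝ => ‖q ν‖^2 / ν^2) (Ioi 0) := by
    apply ContinuousOn.div
    · exact (hq_cont.norm).pow 2
    · exact (continuous_pow 2).continuousOn
    · intro ν hν
      exact (pow_pos (by exact hν : (0:ℝ) < ν) 2).ne'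
  -- monotonicity of g
  have hgmono : ∀ σ τ : ℝ, 0 < σ → σ ≤ τ → g σ ≤ g τ := by
    intro σ τ hσ hστ
    have hτ : (0:ℝ) < τ := lt_of_lt_of_le hσ hστ
    have h1 := ha σ τ hσ hτ
    have h2 : 0 ≤ ‖q σ‖^2 * (τ - σ) / (2 * σ * τ) :=
      div_nonneg (mul_nonneg (sq_nonneg _) (by linarith)) (by positivity)
    exact sub_nonneg.1 (h2.trans h1)
  -- a.e.-measurability of the integrand
  have hFmeas : ∀ s : Set ℝ, MeasurableSet s → s ⊆ Ioi 0 →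
      AEMeasurable (fun ν => ENNReal.ofReal (‖proj ν x‖^2)) (volume.restrict s) := by
    intro s hs hsub
    have h1 : AEMeasurable (fun ν => ENNReal.ofReal (‖q ν‖^2 / ν^2)) (volume.restrict s) :=
      (ENNReal.continuous_ofReal.comp_continuousOn (hr_cont.mono hsub)).aemeasurable hs
    refine h1.congr ?_
    rw [Filter.EventuallyEq, ae_restrict_iff' hs]
    exact Filter.Eventually.of_forall fun ν hν => by rw [hproj_eq ν (hsub hν)]
  -- the half-integral over Ioc equals the increment of g
  have hIoc : ∀ σ M : ℝ, 0 < σ → σ ≤ M →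
      (1/2 : ℝ≥0∞) * ∫⁻ ν in Ioc σ M, ENNReal.ofReal (‖proj ν x‖^2) =
        ENNReal.ofReal (g M - g σ) := by
    intro σ M hσ hσM
    have hsub : Ioc σ M ⊆ Ioi 0 := fun ν hν => lt_trans hσ hν.1
    have hsubIcc : Icc σ M ⊆ Ioi 0 := fun ν hν => lt_of_lt_of_le hσ hν.1
    have hstep1 : ∫⁻ ν in Ioc σ M, ENNReal.ofReal (‖proj ν x‖^2) =
        ∫⁻ ν in Ioc σ M, ENNReal.ofReal (‖q ν‖^2 / ν^2) := by
      refine setLIntegral_congr_fun measurableSet_Ioc ?_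
      exact fun ν hν => by rw [hproj_eq ν (hsub hν)]
    have hInt : IntegrableOn (fun ν : ℝ => ‖q ν‖^2 / ν^2) (Ioc σ M) := by
      have hIcc : IntegrableOn (fun ν : ℝ => ‖q ν‖^2 / ν^2) (Icc σ M) volume :=
        (hr_cont.mono hsubIcc).integrableOn_Icc
      exact hIcc.mono_set Ioc_subset_Icc_self
    have hstep2 : ∫⁻ ν in Ioc σ M, ENNReal.ofReal (‖q ν‖^2 / ν^2) =
        ENNReal.ofReal (∫ ν in Ioc σ M, ‖q ν‖^2 / ν^2) := by
      rw [ofReal_integral_eq_lintegral_ofReal hInt]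
      exact Filter.Eventually.of_forall fun ν => div_nonneg (sq_nonneg _) (sq_nonneg _)
    have hstep3 : ∫ ν in Ioc σ M, ‖q ν‖^2 / ν^2 = 2 * (g M - g σ) := by
      rw [← intervalIntegral.integral_of_le hσM]
      have : ∀ ν : ℝ, ‖q ν‖^2 / ν^2 = 2 * (‖q ν‖^2 / (2 * ν^2)) := by
        intro ν
        rcases eq_or_ne ν 0 with rfl | hν
        · simp
        · field_simp
      simp_rw [this]
      rw [intervalIntegral.integral_const_mul, hftc σ M hσ hσM]
    rw [hstep1, hstep2, hstep3, half_ofReal_two_mul]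
  have hTne : Nonempty T := ⟨⟨0, h0⟩⟩
  -- the real supremum equals g σ
  have hgsup : ∀ σ : ℝ, 0 < σ →
      (⨆ t : T, ((inner ℝ x (t : EuclideanSpace ℝ (Fin d)) : ℝ)
        - ‖(t : EuclideanSpace ℝ (Fin d))‖ ^ 2 / (2 * σ))) = g σ := by
    intro σ hσ
    have hbdd : BddAbove (Set.range fun t : T =>
        (inner ℝ x (t : EuclideanSpace ℝ (Fin d)) : ℝ)
          - ‖(t : EuclideanSpace ℝ (Fin d))‖ ^ 2 / (2 * σ)) := by
      refine ⟨g σ, ?_⟩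
      rintro a ⟨t, rfl⟩
      exact hkey σ hσ t t.2
    refine le_antisymm (ciSup_le fun t => hkey σ hσ t t.2) ?_
    have := le_ciSup hbdd (⟨q σ, hq_mem σ hσ⟩ : T)
    exact this
  -- the ENNReal supremum as a limit of g
  have hsup_eq : ∀ σ : ℝ, 0 < σ →
      (⨆ t : T, ENNReal.ofReal (inner ℝ x (t : EuclideanSpace ℝ (Fin d)) : ℝ)) =
        ⨆ n : ℕ, ENNReal.ofReal (g (σ + n)) := by
    intro σ hσ
    have hpos : ∀ n : ℕ, (0:ℝ) < σ + n := fun n =>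
      add_pos_of_pos_of_nonneg hσ (Nat.cast_nonneg n)
    refine le_antisymm (iSup_le fun t => ?_) (iSup_le fun n => ?_)
    · -- each inner product is dominated by the limit of g
      have hden : Filter.Tendsto (fun n : ℕ => 2 * (σ + n)) Filter.atTop Filter.atTop := by
        have h1 : Filter.Tendsto (fun n : ℕ => (n : ℝ)) Filter.atTop Filter.atTop :=
          tendsto_natCast_atTop_atTop
        have h2 : Filter.Tendsto (fun n : ℕ => σ + (n : ℝ)) Filter.atTop Filter.atTop :=
          Filter.tendsto_atTop_add_const_left _ σ h1
        exact (Filter.tendsto_const_mul_atTop_of_pos (by norm_num : (0:ℝ) < 2)).2 h2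
      have htend : Filter.Tendsto (fun n : ℕ =>
          (inner ℝ x (t : EuclideanSpace ℝ (Fin d)) : ℝ)
            - ‖(t : EuclideanSpace ℝ (Fin d))‖ ^ 2 / (2 * (σ + n))) Filter.atTop
          (nhds (inner ℝ x (t : EuclideanSpace ℝ (Fin d)) : ℝ)) := by
        have h3 : Filter.Tendsto (fun n : ℕ =>
            ‖(t : EuclideanSpace ℝ (Fin d))‖ ^ 2 / (2 * (σ + n))) Filter.atTop (nhds 0) :=
          Filter.Tendsto.div_atTop tendsto_const_nhds hden
        have h4 := Filter.Tendsto.const_sub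
          (inner ℝ x (t : EuclideanSpace ℝ (Fin d)) : ℝ) h3
        rwa [sub_zero] at h4
      have htend' : Filter.Tendsto (fun n : ℕ =>
          ENNReal.ofReal ((inner ℝ x (t : EuclideanSpace ℝ (Fin d)) : ℝ)
            - ‖(t : EuclideanSpace ℝ (Fin d))‖ ^ 2 / (2 * (σ + n)))) Filter.atTop
          (nhds (ENNReal.ofReal (inner ℝ x (t : EuclideanSpace ℝ (Fin d)) : ℝ))) :=
        (ENNReal.continuous_ofReal.tendsto _).comp htend
      refine le_of_tendsto' htend' fun n => ?_
      calc ENNReal.ofReal ((inner ℝ x (t : EuclideanSpace ℝ (Fin d)) : ℝ)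
            - ‖(t : EuclideanSpace ℝ (Fin d))‖ ^ 2 / (2 * (σ + n)))
          ≤ ENNReal.ofReal (g (σ + n)) :=
            ENNReal.ofReal_le_ofReal (hkey (σ + n) (hpos n) t t.2)
        _ ≤ ⨆ n : ℕ, ENNReal.ofReal (g (σ + n)) := le_iSup (fun n : ℕ => ENNReal.ofReal (g (σ + n))) n
    · -- each g value is dominated by the supremum
      have h1 : g (σ + n) ≤ inner ℝ x (q (σ + n)) := by
        have : (0:ℝ) ≤ ‖q (σ + n)‖ ^ 2 / (2 * (σ + n)) :=
          div_nonneg (sq_nonneg _) (by linarith [hpos n])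
        have h2 : g (σ + n) = inner ℝ x (q (σ + n)) - ‖q (σ + n)‖ ^ 2 / (2 * (σ + n)) := rfl
        rw [h2]
        exact sub_le_self _ this
      calc ENNReal.ofReal (g (σ + n)) ≤ ENNReal.ofReal (inner ℝ x (q (σ + n))) :=
            ENNReal.ofReal_le_ofReal h1
        _ ≤ ⨆ t : T, ENNReal.ofReal (inner ℝ x (t : EuclideanSpace ℝ (Fin d)) : ℝ) :=
            le_iSup (fun t : T => ENNReal.ofReal (inner ℝ x (t : EuclideanSpace ℝ (Fin d)) : ℝ))
              (⟨q (σ + n), hq_mem _ (hpos n)⟩ : T)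
  -- main identity
  have hmain : ∀ σ : ℝ, 0 < σ →
      (⨆ t : T, ENNReal.ofReal (inner ℝ x (t : EuclideanSpace ℝ (Fin d)) : ℝ)) =
        ENNReal.ofReal (g σ) + (1/2 : ℝ≥0∞) * ∫⁻ ν in Ioi σ, ENNReal.ofReal (‖proj ν x‖ ^ 2) := by
    intro σ hσ
    have hσn : ∀ n : ℕ, σ ≤ σ + n := fun n => le_add_of_nonneg_right (Nat.cast_nonneg n)
    have hIoiI : ∫⁻ ν in Ioi σ, ENNReal.ofReal (‖proj ν x‖ ^ 2) =
        ⨆ n : ℕ, ∫⁻ ν in Ioc σ (σ + n), ENNReal.ofReal (‖proj ν x‖ ^ 2) := by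
      refine lintegral_monotone_union (fun n => measurableSet_Ioc) ?_ ?_ ?_
      · intro n m hnm
        exact Ioc_subset_Ioc le_rfl (by exact_mod_cast add_le_add_right (Nat.cast_le.2 hnm) σ)
      · ext ν
        simp only [mem_iUnion, mem_Ioc, mem_Ioi]
        constructor
        · rintro ⟨n, h1, h2⟩; exact h1
        · intro h1
          obtain ⟨n, hn⟩ := exists_nat_ge (ν - σ)
          exact ⟨n, h1, by linarith⟩
      · intro n
        exact hFmeas _ measurableSet_Ioc (fun ν hν => lt_trans hσ hν.1)
    have h5 : ∀ n : ℕ, (1/2 : ℝ≥0∞) * ∫⁻ ν in Ioc σ (σ + n), ENNReal.ofReal (‖proj ν x‖ ^ 2)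
        = ENNReal.ofReal (g (σ + n) - g σ) := fun n => hIoc σ (σ + n) hσ (hσn n)
    rw [hIoiI, ENNReal.mul_iSup, iSup_congr h5, ENNReal.add_iSup, hsup_eq σ hσ]
    refine iSup_congr fun n => ?_
    rw [← ENNReal.ofReal_add (hg0 σ hσ) (sub_nonneg.2 (hgmono σ (σ + n) hσ (hσn n)))]
    congr 1
    ring
  constructor
  · intro σ hσ
    rw [hgsup σ hσ]
    exact hmain σ hσ
  · -- limit σ → 0
    have hIoi0 : ∫⁻ ν in Ioi (0:ℝ), ENNReal.ofReal (‖proj ν x‖ ^ 2) =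
        ⨆ k : ℕ, ∫⁻ ν in Ioi (1/((k:ℝ)+1)), ENNReal.ofReal (‖proj ν x‖ ^ 2) := by
      refine lintegral_monotone_union (fun k => measurableSet_Ioi) ?_ ?_ ?_
      · intro k m hkm
        refine Ioi_subset_Ioi (one_div_le_one_div_of_le (by positivity) ?_)
        exact_mod_cast add_le_add_left (Nat.cast_le.2 hkm) 1
      · ext ν
        simp only [mem_iUnion, mem_Ioi]
        constructor
        · rintro ⟨k, hk⟩
          exact lt_trans (by positivity) hk
        · intro h
          exact exists_nat_one_div_lt h
      · intro k
        exact hFmeas _ measurableSet_Ioi (fun ν hν => lt_trans (by positivity : (0:ℝ) < 1/((k:ℝ)+1)) hν)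
    have hge : (1/2 : ℝ≥0∞) * ∫⁻ ν in Ioi (0:ℝ), ENNReal.ofReal (‖proj ν x‖ ^ 2) ≤
        ⨆ t : T, ENNReal.ofReal (inner ℝ x (t : EuclideanSpace ℝ (Fin d)) : ℝ) := by
      rw [hIoi0, ENNReal.mul_iSup]
      refine iSup_le fun k => ?_
      have hk : (0:ℝ) < 1/((k:ℝ)+1) := by positivity
      rw [hmain _ hk]
      exact le_add_self
    have hle : (⨆ t : T, ENNReal.ofReal (inner ℝ x (t : EuclideanSpace ℝ (Fin d)) : ℝ)) ≤
        (1/2 : ℝ≥0∞) * ∫⁻ ν in Ioi (0:ℝ), ENNReal.ofReal (‖proj ν x‖ ^ 2) := by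
      have hbound : ∀ k : ℕ,
          (⨆ t : T, ENNReal.ofReal (inner ℝ x (t : EuclideanSpace ℝ (Fin d)) : ℝ)) ≤
            ENNReal.ofReal (g (1/((k:ℝ)+1)))
              + (1/2 : ℝ≥0∞) * ∫⁻ ν in Ioi (0:ℝ), ENNReal.ofReal (‖proj ν x‖ ^ 2) := by
        intro k
        have hk : (0:ℝ) < 1/((k:ℝ)+1) := by positivity
        rw [hmain _ hk]
        gcongr
      have htend0 : Filter.Tendsto (fun k : ℕ => ENNReal.ofReal (g (1/((k:ℝ)+1))))
          Filter.atTop (nhds 0) := by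
        have hr : Filter.Tendsto (fun k : ℕ => g (1/((k:ℝ)+1))) Filter.atTop (nhds 0) := by
          have hup : Filter.Tendsto (fun k : ℕ => (1/((k:ℝ)+1)) * (‖x‖^2/2))
              Filter.atTop (nhds 0) := by
            have h := tendsto_one_div_add_atTop_nhds_zero_nat.mul_const (‖x‖^2/2)
            rwa [zero_mul] at h
          refine tendsto_of_tendsto_of_tendsto_of_le_of_le tendsto_const_nhds hup ?_ ?_
          · intro k; exact hg0 _ (by positivity)
          · intro k
            have h1 := hgle (1/((k:ℝ)+1)) (by positivity)
            have h2 : (1/((k:ℝ)+1)) * ‖x‖^2 / 2 = (1/((k:ℝ)+1)) * (‖x‖^2/2) := by ring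
            exact h1.trans_eq h2
        have := (ENNReal.continuous_ofReal.tendsto 0).comp hr
        rw [ENNReal.ofReal_zero] at this
        exact this
      have hT : Filter.Tendsto (fun k : ℕ => ENNReal.ofReal (g (1/((k:ℝ)+1)))
            + (1/2 : ℝ≥0∞) * ∫⁻ ν in Ioi (0:ℝ), ENNReal.ofReal (‖proj ν x‖ ^ 2))
          Filter.atTop
          (nhds ((1/2 : ℝ≥0∞) * ∫⁻ ν in Ioi (0:ℝ), ENNReal.ofReal (‖proj ν x‖ ^ 2))) := by
        have := htend0.add (tendsto_const_nhds
          (x := (1/2 : ℝ≥0∞) * ∫⁻ ν in Ioi (0:ℝ), ENNReal.ofReal (‖proj ν x‖ ^ 2))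
          (f := Filter.atTop (α := ℕ)))
        simpa using this
      exact ge_of_tendsto' hT hbound
    exact le_antisymm hle hge
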